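/- Let c>0, g>0, 0≤β<1, γ = 1/√(1−β²), and let t(τ) = (γc/g)·arcsin(gτ/c), z(τ) = −(c²/g)·(1 − √(1−(gτ/c)²)). Then for every h with 0<h≤c²/g, the coordinate time elapsed until the falling body reaches z=−h is t_h := t(τ_h) = γ·(2c/g)·arcsin(√(gh/(2c²))), where τ_h = (c/g)·√(1−(1−gh/c²)²) is the proper time with z(τ_h)=−h. In particular t_h = γ·t_h|_{β=0}, so the coordinate drop time depends on the initial horizontal velocity through the factor γ. -/
import Mathlib

open Real

lemma arcsin_double_aux (u : ℝ) (h0 : 0 ≤ u) (h1 : u ≤ 1) :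
    Real.arcsin (Real.sqrt (1 - (1 - u)^2)) = 2 * Real.arcsin (Real.sqrt (u / 2)) := by
  set θ := Real.arcsin (Real.sqrt (u / 2)) with hθ
  have hsle1 : Real.sqrt (u / 2) ≤ 1 := Real.sqrt_le_one.2 (by linarith)
  have hsnn : 0 ≤ Real.sqrt (u / 2) := Real.sqrt_nonneg _
  have hθnn : 0 ≤ θ := Real.arcsin_nonneg.2 hsnn
  have hhalf : Real.sqrt (1/2 : ℝ) = Real.sqrt 2 / 2 := by
    have h2 : Real.sqrt (1/2 : ℝ) * Real.sqrt 2 = 1 := by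
      rw [← Real.sqrt_mul (by norm_num)]; norm_num
    nlinarith [Real.mul_self_sqrt (by norm_num : (0:ℝ) ≤ 2), Real.sqrt_nonneg (2:ℝ),
      Real.sqrt_nonneg (1/2 : ℝ)]
  have hθle : θ ≤ Real.pi / 4 := by
    have h₂ : Real.sqrt (u / 2) ≤ Real.sin (Real.pi / 4) := by
      rw [Real.sin_pi_div_four, ← hhalf]
      exact Real.sqrt_le_sqrt (by linarith)
    calc θ ≤ Real.arcsin (Real.sin (Real.pi / 4)) := Real.monotone_arcsin h₂
      _ = Real.pi / 4 := Real.arcsin_sin (by linarith [Real.pi_pos]) (by linarith [Real.pi_pos])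
  have hsin : Real.sin (2 * θ) = Real.sqrt (1 - (1 - u)^2) := by
    rw [Real.sin_two_mul, hθ, Real.sin_arcsin (by linarith) hsle1, Real.cos_arcsin,
      Real.sq_sqrt (by linarith : (0:ℝ) ≤ u / 2)]
    rw [show (1 - (1-u)^2 : ℝ) = (2:ℝ)^2 * ((u/2) * (1 - u/2)) by ring,
      Real.sqrt_mul (by positivity), Real.sqrt_sq (by norm_num),
      Real.sqrt_mul (by linarith)]
    ring
  rw [← hsin, Real.arcsin_sin (by linarith [Real.pi_pos]) (by linarith [Real.pi_pos])]

theorem scalar_theory_coordinate_drop_time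
    (c g β : ℝ) (hc : 0 < c) (hg : 0 < g) (hβ0 : 0 ≤ β) (hβ1 : β < 1)
    (γ : ℝ) (hγ : γ = 1 / Real.sqrt (1 - β^2))
    (t z : ℝ → ℝ)
    (ht : t = fun τ => (γ * c / g) * Real.arcsin (g * τ / c))
    (hz : z = fun τ => -(c^2 / g) * (1 - Real.sqrt (1 - (g * τ / c)^2))) :
    ∀ h : ℝ, 0 < h → h ≤ c^2 / g →
      z ((c / g) * Real.sqrt (1 - (1 - g * h / c^2)^2)) = -h ∧
      t ((c / g) * Real.sqrt (1 - (1 - g * h / c^2)^2)) =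
        γ * ((2 * c / g) * Real.arcsin (Real.sqrt (g * h / (2 * c^2)))) := by
  intro h h0 h1
  subst ht hz
  set u : ℝ := g * h / c^2 with hu
  have hu0 : 0 < u := by positivity
  have hu1 : u ≤ 1 := by
    rw [hu, div_le_one (by positivity)]
    calc g * h ≤ g * (c^2 / g) := by nlinarith
      _ = c^2 := by field_simp
  have harg : g * ((c / g) * Real.sqrt (1 - (1 - u)^2)) / c
      = Real.sqrt (1 - (1 - u)^2) := by field_simp
  have hX : (0:ℝ) ≤ 1 - (1 - u)^2 := by nlinarith
  constructor
  · simp only [harg]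
    rw [Real.sq_sqrt hX, show (1 - (1 - (1-u)^2) : ℝ) = (1-u)^2 by ring,
      Real.sqrt_sq (by linarith)]
    rw [hu]; field_simp; ring
  · simp only [harg]
    rw [arcsin_double_aux u (le_of_lt hu0) hu1,
      show (g * h / (2 * c^2) : ℝ) = u / 2 by rw [hu]; ring]
    ring
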